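/- Let N ≥ 1 and let P_{XYZ|ABC} be a family of probability distributions on triples (x,y,z), with x,y ∈ {+1,−1}, z in a finite set, indexed by settings a ∈ {0,2,…,2N−2}, b ∈ {1,3,…,2N−1}, and c in a finite set, satisfying the non-signalling conditions: the marginal of (X,Y) given (a,b,c) does not depend on c, the marginal of (X,Z) given (a,b,c) does not depend on b, and the marginal of (Y,Z) given (a,b,c) does not depend on a. Then for all settings a, b, c, the variational distance between the joint distribution P_{XZ|a,b,c} and the product of the uniform distribution on {+1,−1} with the marginal P_{Z|a,b,c} satisfies 2·D(P_{XZ|a,b,c}, uniform × P_{Z|a,b,c}) ≤ I_N, where I_N is the chained-Bell quantity of the two-party marginal P_{XY|AB}. -/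
import Mathlib


noncomputable section

open Finset

/-- The two outcomes `+1` and `-1`. -/
def pm : Finset ℤ := {1, -1}

/-- Settings on side A: `{0, 2, 4, …, 2N-2}`. -/
def SA (N : ℕ) : Finset ℕ := (Finset.range N).image (fun k => 2 * k)

/-- Settings on side B: `{1, 3, 5, …, 2N-1}`. -/
def SB (N : ℕ) : Finset ℕ := (Finset.range N).image (fun k => 2 * k + 1)

section
variable {C Z : Type} [Fintype Z]

/-- Marginal distribution of `(X, Y)` given settings `(a, b, c)`. -/
def PXY (P : ℕ → ℕ → C → ℤ → ℤ → Z → ℝ) (a b : ℕ) (c : C) (x y : ℤ) : ℝ :=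
  ∑ z, P a b c x y z

/-- Marginal distribution of `(X, Z)` given settings `(a, b, c)`. -/
def PXZ (P : ℕ → ℕ → C → ℤ → ℤ → Z → ℝ) (a b : ℕ) (c : C) (x : ℤ) (z : Z) : ℝ :=
  ∑ y ∈ pm, P a b c x y z

/-- Marginal distribution of `Z` given settings `(a, b, c)`. -/
def PZ (P : ℕ → ℕ → C → ℤ → ℤ → Z → ℝ) (a b : ℕ) (c : C) (z : Z) : ℝ :=
  ∑ x ∈ pm, ∑ y ∈ pm, P a b c x y z

/-- Probability that `X = Y` given settings `(a, b, c)`. -/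
def Pagree (P : ℕ → ℕ → C → ℤ → ℤ → Z → ℝ) (a b : ℕ) (c : C) : ℝ :=
  PXY P a b c 1 1 + PXY P a b c (-1) (-1)

/-- Probability that `X ≠ Y` given settings `(a, b, c)`. -/
def Pdiff (P : ℕ → ℕ → C → ℤ → ℤ → Z → ℝ) (a b : ℕ) (c : C) : ℝ :=
  PXY P a b c 1 (-1) + PXY P a b c (-1) 1

/-- Chained-Bell quantity `I_N` of the two-party marginal, computed at setting `c`:
`I_N = P(X=Y | A=0, B=2N-1) + ∑_{a,b : |a-b|=1} P(X≠Y | A=a, B=b)`. -/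
def IN (P : ℕ → ℕ → C → ℤ → ℤ → Z → ℝ) (N : ℕ) (c : C) : ℝ :=
  Pagree P 0 (2 * N - 1) c +
    ∑ p ∈ (SA N ×ˢ SB N).filter (fun p => p.1 + 1 = p.2 ∨ p.2 + 1 = p.1),
      Pdiff P p.1 p.2 c

/-- Variational distance between the joint distribution `P_{XZ|a,b,c}` on `{+1,-1} × Z`
and the product of the uniform distribution on `{+1,-1}` with `P_{Z|a,b,c}`
(the latter assigns `(x, z)` the value `(1/2) · P_Z(z)`). -/
def DXZ (P : ℕ → ℕ → C → ℤ → ℤ → Z → ℝ) (a b : ℕ) (c : C) : ℝ :=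
  (1 / 2) * ∑ x ∈ pm, ∑ z, |PXZ P a b c x z - (1 / 2) * PZ P a b c z|

end

private lemma tele_abs (g h : ℕ → ℝ) (k m : ℕ) (hkm : k ≤ m)
    (hb : ∀ j, k ≤ j → j < m → |g (j+1) - g j| ≤ h j) :
    |g m - g k| ≤ ∑ j ∈ Finset.Ico k m, h j := by
  induction m, hkm using Nat.le_induction with
  | base => simp
  | succ m hm ih =>
    rw [Finset.sum_Ico_succ_top hm]
    have h1 := ih (fun j hj hjm => hb j hj (by omega))
    have h2 := hb m hm (by omega)
    have h3 := abs_sub_le (g (m+1)) (g m) (g k)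
    linarith

/-- For any non-signalling family of distributions `P_{XYZ|ABC}`,
`2 · D(P_{XZ|a,b,c}, uniform × P_{Z|a,b,c}) ≤ I_N`. -/
theorem statement3 {C Z : Type} [Fintype Z] (N : ℕ) (hN : 1 ≤ N)
    (P : ℕ → ℕ → C → ℤ → ℤ → Z → ℝ)
    (hpos : ∀ a ∈ SA N, ∀ b ∈ SB N, ∀ (c : C), ∀ x ∈ pm, ∀ y ∈ pm, ∀ z : Z,
      0 ≤ P a b c x y z)
    (hsum : ∀ a ∈ SA N, ∀ b ∈ SB N, ∀ c : C,
      ∑ x ∈ pm, ∑ y ∈ pm, ∑ z, P a b c x y z = 1)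
    (hNS1 : ∀ a ∈ SA N, ∀ b ∈ SB N, ∀ (c c' : C), ∀ x ∈ pm, ∀ y ∈ pm,
      PXY P a b c x y = PXY P a b c' x y)
    (hNS2 : ∀ a ∈ SA N, ∀ b ∈ SB N, ∀ b' ∈ SB N, ∀ (c : C), ∀ x ∈ pm, ∀ z : Z,
      PXZ P a b c x z = PXZ P a b' c x z)
    (hNS3 : ∀ a ∈ SA N, ∀ a' ∈ SA N, ∀ b ∈ SB N, ∀ (c : C), ∀ y ∈ pm, ∀ z : Z,
      ∑ x ∈ pm, P a b c x y z = ∑ x ∈ pm, P a' b c x y z) :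
    ∀ a ∈ SA N, ∀ b ∈ SB N, ∀ c : C, ∀ c₀ : C,
      2 * DXZ P a b c ≤ IN P N c₀ := by
  intro a ha b hb c c₀
  obtain ⟨M, rfl⟩ : ∃ M, N = M + 1 := ⟨N - 1, by omega⟩
  set N := M + 1 with hNdef
  have h1pm : (1:ℤ) ∈ pm := by simp [pm]
  have h2pm : (-1:ℤ) ∈ pm := by simp [pm]
  have hSA : ∀ j, j < N → 2*j ∈ SA N := by
    intro j hj; simp only [SA, Finset.mem_image, Finset.mem_range]; exact ⟨j, hj, rfl⟩
  have hSB : ∀ j, j < N → 2*j+1 ∈ SB N := by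
    intro j hj; simp only [SB, Finset.mem_image, Finset.mem_range]; exact ⟨j, hj, rfl⟩
  have hb0eq : 2*M+1 = 2*N-1 := by omega
  have hb0 : 2*N-1 ∈ SB N := by rw [← hb0eq]; exact hSB M (by omega)
  have h0SA : 0 ∈ SA N := by simpa using hSA 0 (by omega)
  obtain ⟨k, hk, rfl⟩ : ∃ k, k < N ∧ a = 2*k := by
    simp only [SA, Finset.mem_image, Finset.mem_range] at ha
    obtain ⟨k, hk, h⟩ := ha; exact ⟨k, hk, h.symm⟩
  -- the key one-variable marginal difference, independent of b
  set f : ℕ → Z → ℝ := fun a' z => PXZ P a' (2*N-1) c 1 z - PXZ P a' (2*N-1) c (-1) z with hf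
  have hfb : ∀ a' ∈ SA N, ∀ b' ∈ SB N, ∀ z,
      f a' z = PXZ P a' b' c 1 z - PXZ P a' b' c (-1) z := by
    intro a' ha' b' hb' z
    show PXZ P a' (2*N-1) c 1 z - PXZ P a' (2*N-1) c (-1) z = _
    rw [hNS2 a' ha' (2*N-1) hb0 b' hb' c 1 h1pm z,
        hNS2 a' ha' (2*N-1) hb0 b' hb' c (-1) h2pm z]
  have hpm : ∀ (Q : ℤ → ℝ), ∑ x ∈ pm, Q x = Q 1 + Q (-1) := by intro Q; simp [pm]
  have hPXZ : ∀ a' b' (x : ℤ) z, PXZ P a' b' c x z = P a' b' c x 1 z + P a' b' c x (-1) z := by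
    intro a' b' x z; simp [PXZ, pm]
  -- expansion of f at any b'
  have hfexp : ∀ a' ∈ SA N, ∀ b' ∈ SB N, ∀ z,
      f a' z = P a' b' c 1 1 z + P a' b' c 1 (-1) z - P a' b' c (-1) 1 z - P a' b' c (-1) (-1) z := by
    intro a' ha' b' hb' z
    rw [hfb a' ha' b' hb' z, hPXZ, hPXZ]; ring
  -- non-signalling transfer between two A settings at a common B setting
  have hG : ∀ a₁, a₁ ∈ SA N → ∀ a₂, a₂ ∈ SA N → ∀ b', b' ∈ SB N → ∀ y, y ∈ pm → ∀ z,
      P a₁ b' c 1 y z + P a₁ b' c (-1) y z = P a₂ b' c 1 y z + P a₂ b' c (-1) y z := by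
    intro a₁ ha₁ a₂ ha₂ b' hb' y hy z
    have := hNS3 a₁ ha₁ a₂ ha₂ b' hb' c y hy z
    rwa [hpm, hpm] at this
  -- step bound along the chain
  have hstep : ∀ j, j + 1 < N → ∀ z,
      |f (2*(j+1)) z - f (2*j) z| ≤
        2*(P (2*j) (2*j+1) c 1 (-1) z + P (2*j) (2*j+1) c (-1) 1 z)
      + 2*(P (2*(j+1)) (2*j+1) c 1 (-1) z + P (2*(j+1)) (2*j+1) c (-1) 1 z) := by
    intro j hj z
    have hA1 : 2*j ∈ SA N := hSA j (by omega)
    have hA2 : 2*(j+1) ∈ SA N := hSA (j+1) hj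
    have hB : 2*j+1 ∈ SB N := hSB j (by omega)
    have e1 := hfexp (2*j) hA1 (2*j+1) hB z
    have e2 := hfexp (2*(j+1)) hA2 (2*j+1) hB z
    have g1 := hG (2*j) hA1 (2*(j+1)) hA2 (2*j+1) hB 1 h1pm z
    have g2 := hG (2*j) hA1 (2*(j+1)) hA2 (2*j+1) hB (-1) h2pm z
    have p1 := hpos (2*j) hA1 (2*j+1) hB c 1 h1pm (-1) h2pm z
    have p2 := hpos (2*j) hA1 (2*j+1) hB c (-1) h2pm 1 h1pm z
    have p3 := hpos (2*(j+1)) hA2 (2*j+1) hB c 1 h1pm (-1) h2pm z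
    have p4 := hpos (2*(j+1)) hA2 (2*j+1) hB c (-1) h2pm 1 h1pm z
    rw [abs_le]; constructor <;> [nlinarith [e1, e2, g1, g2]; nlinarith [e1, e2, g1, g2]]
  -- closing bound
  have hclose : ∀ z,
      |f 0 z + f (2*M) z| ≤
        2*(P 0 (2*N-1) c 1 1 z + P 0 (2*N-1) c (-1) (-1) z)
      + 2*(P (2*M) (2*N-1) c 1 (-1) z + P (2*M) (2*N-1) c (-1) 1 z) := by
    intro z
    have hA2 : 2*M ∈ SA N := hSA M (by omega)
    have e1 := hfexp 0 h0SA (2*N-1) hb0 z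
    have e2 := hfexp (2*M) hA2 (2*N-1) hb0 z
    have g1 := hG 0 h0SA (2*M) hA2 (2*N-1) hb0 1 h1pm z
    have g2 := hG 0 h0SA (2*M) hA2 (2*N-1) hb0 (-1) h2pm z
    have p1 := hpos 0 h0SA (2*N-1) hb0 c 1 h1pm 1 h1pm z
    have p2 := hpos 0 h0SA (2*N-1) hb0 c (-1) h2pm (-1) h2pm z
    have p3 := hpos (2*M) hA2 (2*N-1) hb0 c 1 h1pm (-1) h2pm z
    have p4 := hpos (2*M) hA2 (2*N-1) hb0 c (-1) h2pm 1 h1pm z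
    rw [abs_le]; constructor <;> [nlinarith [e1, e2, g1, g2]; nlinarith [e1, e2, g1, g2]]
  -- edge weight
  set h : ℕ → Z → ℝ := fun j z =>
      2*(P (2*j) (2*j+1) c 1 (-1) z + P (2*j) (2*j+1) c (-1) 1 z)
    + 2*(P (2*(j+1)) (2*j+1) c 1 (-1) z + P (2*(j+1)) (2*j+1) c (-1) 1 z) with hh
  -- pointwise main bound
  have hmain : ∀ z, 2 * |f (2*k) z| ≤
      (∑ j ∈ Finset.range M, h j z)
      + (2*(P 0 (2*N-1) c 1 1 z + P 0 (2*N-1) c (-1) (-1) z)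
         + 2*(P (2*M) (2*N-1) c 1 (-1) z + P (2*M) (2*N-1) c (-1) 1 z)) := by
    intro z
    have T1 : |f (2*k) z - f 0 z| ≤ ∑ j ∈ Finset.Ico 0 k, h j z := by
      have := tele_abs (fun j => f (2*j) z) (fun j => h j z) 0 k (by omega)
        (fun j _ hj => hstep j (by omega) z)
      simpa using this
    have T2 : |f (2*M) z - f (2*k) z| ≤ ∑ j ∈ Finset.Ico k M, h j z := by
      exact tele_abs (fun j => f (2*j) z) (fun j => h j z) k M (by omega)
        (fun j _ hj => hstep j (by omega) z)
    have T3 := hclose z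
    have hsplit : (∑ j ∈ Finset.Ico 0 k, h j z) + (∑ j ∈ Finset.Ico k M, h j z)
        = ∑ j ∈ Finset.range M, h j z := by
      rw [Finset.sum_Ico_consecutive _ (Nat.zero_le k) (by omega : k ≤ M), Finset.range_eq_Ico]
    have habs : |f (2*k) z - f 0 z| + |f (2*M) z - f (2*k) z| + |f 0 z + f (2*M) z|
        ≥ 2 * |f (2*k) z| := by
      have t := abs_add_three (f (2*k) z - f 0 z) (f (2*k) z - f (2*M) z) (f 0 z + f (2*M) z)
      have e : (f (2*k) z - f 0 z) + (f (2*k) z - f (2*M) z) + (f 0 z + f (2*M) z)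
          = 2 * f (2*k) z := by ring
      rw [e] at t
      have : |2 * f (2*k) z| = 2 * |f (2*k) z| := by
        rw [abs_mul]; norm_num
      rw [this] at t
      have : |f (2*k) z - f (2*M) z| = |f (2*M) z - f (2*k) z| := abs_sub_comm _ _
      linarith [t, this.le, this.ge]
    linarith [T1, T2, T3, habs, hsplit.le, hsplit.ge]
  -- sum over z
  have key2 : ∀ (p q : Z → ℝ), (∑ z, (2*(p z + q z))) = 2*((∑ z, p z) + (∑ z, q z)) := by
    intro p q
    rw [← Finset.mul_sum, Finset.sum_add_distrib]
  have hzsum : ∀ j, (∑ z, h j z) = 2 * Pdiff P (2*j) (2*j+1) c + 2 * Pdiff P (2*(j+1)) (2*j+1) c := by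
    intro j
    show (∑ z, (2*(P (2*j) (2*j+1) c 1 (-1) z + P (2*j) (2*j+1) c (-1) 1 z)
      + 2*(P (2*(j+1)) (2*j+1) c 1 (-1) z + P (2*(j+1)) (2*j+1) c (-1) 1 z))) = _
    rw [Finset.sum_add_distrib, key2, key2]
    simp [Pdiff, PXY]
  have hsummed : ∑ z, 2 * |f (2*k) z| ≤
      (∑ j ∈ Finset.range M, (2 * Pdiff P (2*j) (2*j+1) c + 2 * Pdiff P (2*(j+1)) (2*j+1) c))
      + (2 * Pagree P 0 (2*N-1) c + 2 * Pdiff P (2*M) (2*N-1) c) := by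
    calc ∑ z, 2 * |f (2*k) z|
        ≤ ∑ z, ((∑ j ∈ Finset.range M, h j z)
          + (2*(P 0 (2*N-1) c 1 1 z + P 0 (2*N-1) c (-1) (-1) z)
           + 2*(P (2*M) (2*N-1) c 1 (-1) z + P (2*M) (2*N-1) c (-1) 1 z))) :=
          Finset.sum_le_sum (fun z _ => hmain z)
      _ = (∑ j ∈ Finset.range M, ∑ z, h j z)
          + (2 * Pagree P 0 (2*N-1) c + 2 * Pdiff P (2*M) (2*N-1) c) := by
          rw [Finset.sum_add_distrib, Finset.sum_comm]
          congr 1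
          rw [Finset.sum_add_distrib, key2, key2]
          simp [Pagree, Pdiff, PXY]
      _ = _ := by rw [Finset.sum_congr rfl (fun j _ => hzsum j)]
  -- LHS identification
  have hPZe : ∀ z, PZ P (2*k) b c z = PXZ P (2*k) b c 1 z + PXZ P (2*k) b c (-1) z := by
    intro z; simp [PZ, PXZ, pm]
  have hLHS : 2 * DXZ P (2*k) b c = ∑ z, |f (2*k) z| := by
    rw [DXZ, hpm]
    have e1 : ∀ z, |PXZ P (2*k) b c 1 z - 1/2 * PZ P (2*k) b c z| = 1/2 * |f (2*k) z| := by
      intro z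
      rw [hfb (2*k) (hSA k hk) b hb z]
      rw [hPZe z]
      rw [show PXZ P (2*k) b c 1 z - 1/2*(PXZ P (2*k) b c 1 z + PXZ P (2*k) b c (-1) z)
          = 1/2 * (PXZ P (2*k) b c 1 z - PXZ P (2*k) b c (-1) z) from by ring]
      rw [abs_mul]; norm_num
    have e2 : ∀ z, |PXZ P (2*k) b c (-1) z - 1/2 * PZ P (2*k) b c z| = 1/2 * |f (2*k) z| := by
      intro z
      rw [hfb (2*k) (hSA k hk) b hb z]
      rw [hPZe z]
      rw [show PXZ P (2*k) b c (-1) z - 1/2*(PXZ P (2*k) b c 1 z + PXZ P (2*k) b c (-1) z)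
          = -(1/2) * (PXZ P (2*k) b c 1 z - PXZ P (2*k) b c (-1) z) from by ring]
      rw [abs_mul]; norm_num
    rw [Finset.sum_congr rfl (fun z _ => e1 z), Finset.sum_congr rfl (fun z _ => e2 z)]
    have comb : ((∑ z, 1/2 * |f (2*k) z|) + (∑ z, 1/2 * |f (2*k) z|)) = ∑ z, |f (2*k) z| := by
      rw [← Finset.sum_add_distrib]
      exact Finset.sum_congr rfl (fun z _ => by ring)
    rw [comb]
    ring
  -- IN computation
  have hPdiffc : ∀ a' ∈ SA N, ∀ b' ∈ SB N, Pdiff P a' b' c₀ = Pdiff P a' b' c := by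
    intro a' ha' b' hb'
    unfold Pdiff
    rw [hNS1 a' ha' b' hb' c₀ c 1 h1pm (-1) h2pm, hNS1 a' ha' b' hb' c₀ c (-1) h2pm 1 h1pm]
  have hPagreec : Pagree P 0 (2*N-1) c₀ = Pagree P 0 (2*N-1) c := by
    unfold Pagree
    rw [hNS1 0 h0SA (2*N-1) hb0 c₀ c 1 h1pm 1 h1pm, hNS1 0 h0SA (2*N-1) hb0 c₀ c (-1) h2pm (-1) h2pm]
  have hset : (SA N ×ˢ SB N).filter (fun p => p.1 + 1 = p.2 ∨ p.2 + 1 = p.1)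
      = ((Finset.range N).image (fun j => (2*j, 2*j+1)))
        ∪ ((Finset.range M).image (fun j => (2*(j+1), 2*j+1))) := by
    ext ⟨u, v⟩
    simp only [Finset.mem_filter, Finset.mem_product, Finset.mem_union, Finset.mem_image,
      Finset.mem_range, SA, SB, Prod.mk.injEq]
    constructor
    · rintro ⟨⟨⟨i, hi, rfl⟩, ⟨j', hj', rfl⟩⟩, hor⟩
      rcases hor with h | h
      · left; exact ⟨i, hi, rfl, by omega⟩
      · right; exact ⟨j', by omega, by omega, rfl⟩
    · rintro (⟨j, hj, rfl, rfl⟩ | ⟨j, hj, rfl, rfl⟩)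
      · exact ⟨⟨⟨j, hj, rfl⟩, ⟨j, hj, rfl⟩⟩, Or.inl rfl⟩
      · exact ⟨⟨⟨j+1, by omega, rfl⟩, ⟨j, by omega, rfl⟩⟩, Or.inr rfl⟩
  have hdisj : Disjoint ((Finset.range N).image (fun j => (2*j, 2*j+1)))
      ((Finset.range M).image (fun j => (2*(j+1), 2*j+1))) := by
    simp only [Finset.disjoint_left, Finset.mem_image, Finset.mem_range]
    rintro ⟨u, v⟩ ⟨i, hi, hi2⟩ ⟨j, hj, hj2⟩
    simp only [Prod.mk.injEq] at hi2 hj2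
    omega
  have hIN : IN P N c₀ =
      Pagree P 0 (2*N-1) c
      + ((∑ j ∈ Finset.range M, (Pdiff P (2*j) (2*j+1) c + Pdiff P (2*(j+1)) (2*j+1) c))
        + Pdiff P (2*M) (2*N-1) c) := by
    rw [IN, hset, Finset.sum_union hdisj]
    rw [Finset.sum_image (by intro x _ y _ h; simp only [Prod.mk.injEq] at h; omega),
        Finset.sum_image (by intro x _ y _ h; simp only [Prod.mk.injEq] at h; omega)]
    rw [hPagreec]
    rw [Finset.sum_range_succ]
    have e1 : ∀ j ∈ Finset.range N, Pdiff P (2*j) (2*j+1) c₀ = Pdiff P (2*j) (2*j+1) c := by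
      intro j hj; simp only [Finset.mem_range] at hj
      exact hPdiffc (2*j) (hSA j hj) (2*j+1) (hSB j hj)
    have e2 : ∀ j ∈ Finset.range M, Pdiff P (2*(j+1)) (2*j+1) c₀ = Pdiff P (2*(j+1)) (2*j+1) c := by
      intro j hj; simp only [Finset.mem_range] at hj
      exact hPdiffc (2*(j+1)) (hSA (j+1) (by omega)) (2*j+1) (hSB j (by omega))
    rw [Finset.sum_congr rfl (fun j hj => e1 j (by simp only [Finset.mem_range] at hj ⊢; omega)),
        Finset.sum_congr rfl e2]
    rw [hPdiffc (2*M) (hSA M (by omega)) (2*M+1) (hSB M (by omega))]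
    rw [show 2*M+1 = 2*N-1 from hb0eq]
    rw [Finset.sum_add_distrib]
    ring
  -- finish
  have hfinal : ∑ z, 2 * |f (2*k) z| = 2 * (∑ z, |f (2*k) z|) := by
    rw [Finset.mul_sum]
  rw [hLHS, hIN]
  have := hsummed
  rw [hfinal] at this
  have expand : (∑ j ∈ Finset.range M, (2 * Pdiff P (2*j) (2*j+1) c + 2 * Pdiff P (2*(j+1)) (2*j+1) c))
      = 2 * ∑ j ∈ Finset.range M, (Pdiff P (2*j) (2*j+1) c + Pdiff P (2*(j+1)) (2*j+1) c) := by
    rw [Finset.mul_sum]; congr 1; ext j; ring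
  rw [expand] at this
  linarith
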